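/- On the product space X = ℝ × ℚ_p equipped with the maximum metric d_∞((x₁,x₂),(y₁,y₂)) = max{|x₁−y₁|, ‖x₂−y₂‖_p}, the 2-dimensional Hausdorff measure is a translation-invariant Borel measure that is finite and positive on [0,1] × ℤ_p; hence it is a Haar measure on the locally compact abelian group X. -/

import Mathlib

open MeasureTheory Metric Set ENNReal Filter

section HausdorffHaarMixedAux

variable (p : ℕ) [Fact p.Prime]

/-- The unit ball of `ℚ_p` described by the norm. -/
lemma HHM.unitBall_eq : {x : ℚ_[p] | ‖x‖ ≤ 1} = closedBall 0 1 := by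
  ext x; simp [Metric.mem_closedBall, dist_zero_right]

/-- The closed unit ball of `ℚ_p` as a positive compact set. -/
noncomputable def HHM.K0 : TopologicalSpace.PositiveCompacts ℚ_[p] :=
  ⟨⟨closedBall 0 1, isCompact_closedBall 0 1⟩, by
    refine ⟨0, interior_maximal ball_subset_closedBall isOpen_ball ?_⟩
    exact mem_ball_self one_pos⟩

/-- Ultrametric inequality: p-adic closed balls have diameter at most their radius. -/
lemma HHM.padic_diam_closedBall (x : ℚ_[p]) (r : ℝ) :
    EMetric.diam (closedBall x r) ≤ ENNReal.ofReal r := by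
  refine EMetric.diam_le fun y hy z hz => ?_
  rw [edist_dist]
  refine ENNReal.ofReal_le_ofReal ?_
  have h1 : ‖y - x‖ ≤ r := by simpa [dist_eq_norm] using hy
  have h2 : ‖x - z‖ ≤ r := by
    rw [norm_sub_rev]; simpa [dist_eq_norm] using hz
  calc dist y z = ‖(y - x) + (x - z)‖ := by rw [dist_eq_norm]; ring_nf
    _ ≤ max ‖y - x‖ ‖x - z‖ := Padic.nonarchimedean _ _
    _ ≤ r := max_le h1 h2

/-- The value of the Hausdorff measure does not depend on the ambient σ-algebra. -/
lemma HHM.hm_eq_mkMetric {Y : Type*} [EMetricSpace Y] [MeasurableSpace Y] [BorelSpace Y]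
    (s : Set Y) :
    μH[2] s = (OuterMeasure.mkMetric (fun r : ℝ≥0∞ => r ^ (2:ℝ)) : OuterMeasure Y) s := by
  rw [show (μH[2] : Measure Y) = Measure.mkMetric (fun r : ℝ≥0∞ => r ^ (2:ℝ)) from rfl,
    ← Measure.mkMetric_toOuterMeasure]
  rfl

variable [MeasurableSpace ℚ_[p]] [BorelSpace ℚ_[p]]

lemma HHM.haar_ball_n (n : ℕ) :
    Measure.addHaarMeasure (HHM.K0 p) (closedBall 0 ((p:ℝ) ^ (-n : ℤ))) ≤
      ENNReal.ofReal ((p:ℝ) ^ (-n : ℤ)) := by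
  set μ := Measure.addHaarMeasure (HHM.K0 p) with hμ
  set B : Set ℚ_[p] := closedBall 0 ((p:ℝ) ^ (-n : ℤ)) with hB
  have hBme : MeasurableSet B := measurableSet_closedBall
  have hppos : (0:ℝ) < (p:ℝ) := by exact_mod_cast (Fact.out : p.Prime).pos
  -- translates
  have himg : ∀ j : ℕ, (fun x => (j:ℚ_[p]) + x) '' B = (fun x => (-(j:ℚ_[p])) + x) ⁻¹' B := by
    intro j; ext y
    simp only [Set.mem_image, Set.mem_preimage]
    constructor
    · rintro ⟨x, hx, rfl⟩; simpa using hx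
    · intro h; exact ⟨-(j:ℚ_[p]) + y, h, by ring⟩
  have htrans : ∀ j : ℕ, μ ((fun x => (j:ℚ_[p]) + x) '' B) = μ B := fun j => by
    rw [himg j, measure_preimage_add]
  have hdisj : (Finset.range (p ^ n) : Set ℕ).PairwiseDisjoint
      (fun j => (fun x => (j:ℚ_[p]) + x) '' B) := by
    intro j hj k hk hjk
    simp only [Finset.coe_range, Set.mem_Iio] at hj hk
    rw [Function.onFun, Set.disjoint_left]
    rintro a ⟨x, hx, rfl⟩ ⟨y, hy, hxy⟩
    have hxn : ‖x‖ ≤ (p:ℝ) ^ (-n : ℤ) := by simpa [hB, dist_eq_norm] using hx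
    have hyn : ‖y‖ ≤ (p:ℝ) ^ (-n : ℤ) := by simpa [hB, dist_eq_norm] using hy
    have hcast : ((j:ℤ) - (k:ℤ) : ℚ_[p]) = y - x := by
      push_cast
      linear_combination -hxy
    have hnorm : ‖(((j:ℤ) - k : ℤ) : ℚ_[p])‖ ≤ (p:ℝ) ^ (-n : ℤ) := by
      rw [show (((j:ℤ) - k : ℤ) : ℚ_[p]) = y - x by exact_mod_cast hcast]
      calc ‖y - x‖ = ‖y + (-x)‖ := by ring_nf
        _ ≤ max ‖y‖ ‖-x‖ := Padic.nonarchimedean _ _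
        _ ≤ (p:ℝ) ^ (-n : ℤ) := max_le hyn (by simpa using hxn)
    have hdvd : ((p:ℤ) ^ n) ∣ ((j:ℤ) - k) :=
      (Padic.norm_int_le_pow_iff_dvd ((j:ℤ) - k) n).mp hnorm
    have hj' : (j:ℤ) < (p:ℤ) ^ n := by exact_mod_cast hj
    have hk' : (k:ℤ) < (p:ℤ) ^ n := by exact_mod_cast hk
    have habs : |((j:ℤ) - k)| < (p:ℤ) ^ n := by
      rw [abs_sub_lt_iff]; omega
    have hne : ((j:ℤ) - k) ≠ 0 := by
      intro h; apply hjk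
      have : (j:ℤ) = k := by omega
      exact_mod_cast this
    have := Int.le_of_dvd (abs_pos.mpr hne) ((dvd_abs _ _).mpr hdvd)
    exact absurd habs (not_lt.mpr this)
  have hsub : ∀ j ∈ Finset.range (p ^ n), (fun x => (j:ℚ_[p]) + x) '' B ⊆ closedBall 0 1 := by
    rintro j - a ⟨x, hx, rfl⟩
    have hxn : ‖x‖ ≤ (p:ℝ) ^ (-n : ℤ) := by simpa [hB, dist_eq_norm] using hx
    have h1 : ((p:ℝ) ^ (-n:ℤ)) ≤ 1 := by
      apply zpow_le_one_of_nonpos₀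
      · exact_mod_cast (Fact.out : p.Prime).one_lt.le
      · omega
    have : ‖(j:ℚ_[p]) + x‖ ≤ 1 := by
      calc ‖(j:ℚ_[p]) + x‖ ≤ max ‖(j:ℚ_[p])‖ ‖x‖ := Padic.nonarchimedean _ _
        _ ≤ 1 := max_le (by exact_mod_cast Padic.norm_int_le_one (j:ℤ)) (hxn.trans h1)
    simpa [dist_eq_norm] using this
  have hmeas : ∀ j ∈ Finset.range (p ^ n), MeasurableSet ((fun x => (j:ℚ_[p]) + x) '' B) := by
    intro j _; rw [himg j]
    exact hBme.preimage (measurable_const_add _)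
  have hsum : ((p ^ n : ℕ) : ℝ≥0∞) * μ B ≤ 1 := by
    have h1 : μ (⋃ j ∈ Finset.range (p ^ n), (fun x => (j:ℚ_[p]) + x) '' B)
        = ∑ j ∈ Finset.range (p ^ n), μ ((fun x => (j:ℚ_[p]) + x) '' B) :=
      measure_biUnion_finset hdisj hmeas
    have h2 : μ (⋃ j ∈ Finset.range (p ^ n), (fun x => (j:ℚ_[p]) + x) '' B) ≤ μ (closedBall 0 1) :=
      measure_mono (Set.iUnion₂_subset hsub)
    have h3 : μ (closedBall 0 1) = 1 := Measure.addHaarMeasure_self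
    calc ((p ^ n : ℕ) : ℝ≥0∞) * μ B = ∑ _j ∈ Finset.range (p ^ n), μ B := by
          simp [Finset.sum_const, mul_comm]
      _ = ∑ j ∈ Finset.range (p ^ n), μ ((fun x => (j:ℚ_[p]) + x) '' B) := by
          exact Finset.sum_congr rfl fun j _ => (htrans j).symm
      _ ≤ 1 := h3 ▸ (h1 ▸ h2)
  -- conclude
  have hppn : (0:ℕ) < p ^ n := pow_pos (Fact.out : p.Prime).pos n
  have : μ B ≤ (((p ^ n : ℕ) : ℝ≥0∞))⁻¹ :=
    ENNReal.le_inv_iff_mul_le.mpr (by rw [mul_comm]; exact hsum)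
  refine this.trans (le_of_eq ?_)
  rw [← ENNReal.ofReal_natCast (p ^ n),
    ← ENNReal.ofReal_inv_of_pos (by exact_mod_cast hppn)]
  congr 1
  push_cast
  rw [zpow_neg, zpow_natCast]

lemma HHM.haar_closedBall_le (x : ℚ_[p]) {r : ℝ} (h0 : 0 < r) (h1 : r ≤ 1) :
    Measure.addHaarMeasure (HHM.K0 p) (closedBall x r) ≤ (p : ℝ≥0∞) * ENNReal.ofReal r := by
  set μ := Measure.addHaarMeasure (HHM.K0 p) with hμ
  have hp1 : (1:ℝ) < (p:ℝ) := by exact_mod_cast (Fact.out : p.Prime).one_lt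
  have hppos : (0:ℝ) < (p:ℝ) := by linarith
  -- translate to 0
  have hshift : μ (closedBall x r) = μ (closedBall 0 r) := by
    have : closedBall x r = (fun y => -x + y) ⁻¹' closedBall (0:ℚ_[p]) r := by
      ext y
      simp only [Set.mem_preimage, Metric.mem_closedBall, dist_eq_norm]
      constructor <;> intro h <;> [skip; skip] <;>
        · convert h using 2 <;> ring_nf <;> simp [sub_eq_add_neg, add_comm]
    rw [this, measure_preimage_add]
  -- find m with p⁻¹^m < r ≤ p^{-(m-1)}
  have hexists : ∃ m : ℕ, ((p:ℝ)⁻¹) ^ m < r := exists_pow_lt_of_lt_one h0 (by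
    rw [inv_lt_one_iff₀]; right; exact hp1)
  set m := Nat.find hexists with hm
  have hmlt : ((p:ℝ)⁻¹) ^ m < r := Nat.find_spec hexists
  have hmne : m ≠ 0 := by
    intro h
    rw [h, pow_zero] at hmlt
    linarith
  have hprev : r ≤ ((p:ℝ)⁻¹) ^ (m - 1) := by
    have := Nat.find_min hexists (m := m - 1) (by omega)
    linarith [not_lt.mp this]
  -- closedBall 0 r ⊆ closedBall 0 (p^{-(m-1)})
  have hcb : closedBall (0:ℚ_[p]) r ⊆ closedBall 0 ((p:ℝ) ^ (-(m - 1 : ℕ) : ℤ)) := by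
    apply closedBall_subset_closedBall
    rwa [zpow_neg, zpow_natCast, ← inv_pow]
  have hb1 : μ (closedBall 0 r) ≤ ENNReal.ofReal ((p:ℝ) ^ (-(m - 1 : ℕ) : ℤ)) :=
    (measure_mono hcb).trans (HHM.haar_ball_n p (m - 1))
  have hval : (p:ℝ) ^ (-(m - 1 : ℕ) : ℤ) ≤ p * r := by
    have h2 : (p:ℝ) ^ (-(m - 1 : ℕ) : ℤ) = p * ((p:ℝ)⁻¹) ^ m := by
      rw [zpow_neg, zpow_natCast, ← inv_pow]
      rw [show m = (m - 1) + 1 by omega, pow_succ]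
      field_simp
      rw [Nat.add_sub_cancel]
    rw [h2]
    nlinarith
  rw [hshift]
  refine hb1.trans ?_
  calc ENNReal.ofReal ((p:ℝ) ^ (-(m - 1 : ℕ) : ℤ)) ≤ ENNReal.ofReal ((p:ℝ) * r) :=
        ENNReal.ofReal_le_ofReal hval
    _ = (p : ℝ≥0∞) * ENNReal.ofReal r := by
        rw [ENNReal.ofReal_mul hppos.le, ENNReal.ofReal_natCast]

lemma HHM.lower_bound :
    0 < (OuterMeasure.mkMetric (fun r : ℝ≥0∞ => r ^ (2:ℝ)) : OuterMeasure (ℝ × ℚ_[p]))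
      (Set.Icc (0:ℝ) 1 ×ˢ {x : ℚ_[p] | ‖x‖ ≤ 1}) := by
  rw [← HHM.hm_eq_mkMetric]
  classical
  set haar := Measure.addHaarMeasure (HHM.K0 p) with hhaar
  haveI : SigmaFinite haar := inferInstance
  set ν : Measure (ℝ × ℚ_[p]) := (volume : Measure ℝ).prod haar with hν
  have hp0 : ((2 * p : ℕ) : ℝ≥0∞) ≠ 0 := by
    have := (Fact.out : p.Prime).pos; positivity
  have hptop : ((2 * p : ℕ) : ℝ≥0∞) ≠ ⊤ := ENNReal.natCast_ne_top _
  -- mass distribution principle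
  have key : (((2 * p : ℕ) : ℝ≥0∞))⁻¹ • ν ≤ μH[2] := by
    refine Measure.le_hausdorffMeasure 2 _ 1 one_pos fun s hs => ?_
    rcases Set.eq_empty_or_nonempty s with rfl | ⟨⟨a, b⟩, hab⟩
    · simp
    set D := EMetric.diam s with hD
    have hDtop : D ≠ ⊤ := (hs.trans_lt ENNReal.one_lt_top).ne
    set d := D.toReal with hd
    have hd1 : d ≤ 1 := by
      rw [hd]
      calc D.toReal ≤ (1:ℝ≥0∞).toReal := ENNReal.toReal_mono (by simp) hs
        _ = 1 := by simp
    have hsub : s ⊆ Set.Icc (a - d) (a + d) ×ˢ closedBall b d := by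
      rintro ⟨x, y⟩ hxy
      have h1 : edist (x, y) (a, b) ≤ D := EMetric.edist_le_diam_of_mem hxy hab
      rw [Prod.edist_eq, max_le_iff] at h1
      have hx : dist x a ≤ d := by
        rw [dist_edist, hd]
        exact ENNReal.toReal_mono hDtop h1.1
      have hy : dist y b ≤ d := by
        rw [dist_edist, hd]
        exact ENNReal.toReal_mono hDtop h1.2
      constructor
      · rw [Real.dist_eq, abs_le] at hx
        constructor <;> simp <;> linarith [hx.1, hx.2]
      · exact hy
    have hbound : ν s ≤ ((2 * p : ℕ) : ℝ≥0∞) * D ^ (2:ℝ) := by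
      rcases eq_or_ne D 0 with hD0 | hD0
      · have hd0 : d = 0 := by rw [hd, hD0]; simp
        have : ν s ≤ ν (Set.Icc (a - d) (a + d) ×ˢ closedBall b d) := measure_mono hsub
        rw [hν, Measure.prod_prod, hd0] at this
        simpa using this.trans (by simp)
      · have hdpos : 0 < d := ENNReal.toReal_pos hD0 hDtop
        have hhb : haar (closedBall b d) ≤ (p : ℝ≥0∞) * ENNReal.ofReal d :=
          HHM.haar_closedBall_le p b hdpos hd1
        have hvol : volume (Set.Icc (a - d) (a + d)) = ENNReal.ofReal (2 * d) := by
          rw [Real.volume_Icc]; ring_nf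
        calc ν s ≤ ν (Set.Icc (a - d) (a + d) ×ˢ closedBall b d) := measure_mono hsub
          _ = volume (Set.Icc (a - d) (a + d)) * haar (closedBall b d) := Measure.prod_prod _ _
          _ ≤ ENNReal.ofReal (2 * d) * ((p : ℝ≥0∞) * ENNReal.ofReal d) := by
              rw [hvol]; exact mul_le_mul_right hhb _
          _ = ((2 * p : ℕ) : ℝ≥0∞) * (ENNReal.ofReal d * ENNReal.ofReal d) := by
              rw [ENNReal.ofReal_mul (by norm_num : (0:ℝ) ≤ 2), ENNReal.ofReal_ofNat]
              push_cast
              ring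
          _ = ((2 * p : ℕ) : ℝ≥0∞) * D ^ (2:ℝ) := by
              rw [ENNReal.ofReal_toReal hDtop]
              congr 1
              rw [show (2:ℝ) = ((2:ℕ):ℝ) by norm_num, ENNReal.rpow_natCast]
              ring
    rw [Measure.smul_apply, smul_eq_mul]
    exact (ENNReal.inv_mul_le_iff hp0 hptop).mpr hbound
  -- evaluate ν on the product set
  have hKball : {x : ℚ_[p] | ‖x‖ ≤ 1} = closedBall 0 1 := by
    ext x; simp [Metric.mem_closedBall, dist_zero_right]
  have hνK : ν (Set.Icc (0:ℝ) 1 ×ˢ {x : ℚ_[p] | ‖x‖ ≤ 1}) = 1 := by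
    rw [hKball, hν, Measure.prod_prod, Real.volume_Icc]
    have : haar (closedBall (0:ℚ_[p]) 1) = 1 := Measure.addHaarMeasure_self
    rw [this]
    norm_num
  have := key (Set.Icc (0:ℝ) 1 ×ˢ {x : ℚ_[p] | ‖x‖ ≤ 1})
  rw [Measure.smul_apply, smul_eq_mul, hνK, mul_one] at this
  calc (0:ℝ≥0∞) < (((2 * p : ℕ) : ℝ≥0∞))⁻¹ := ENNReal.inv_pos.mpr hptop
    _ ≤ _ := this


omit [MeasurableSpace ℚ_[p]] [BorelSpace ℚ_[p]] in
lemma HHM.upper_bound [MeasurableSpace (ℝ × ℚ_[p])] [BorelSpace (ℝ × ℚ_[p])] :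
    μH[2] (Set.Icc (0:ℝ) 1 ×ˢ {x : ℚ_[p] | ‖x‖ ≤ 1}) ≤ 1 := by
  classical
  have hp1 : (1:ℝ) < (p:ℝ) := by exact_mod_cast (Fact.out : p.Prime).one_lt
  have hppos : (0:ℝ) < (p:ℝ) := by linarith
  set c : ℕ → ℝ := fun n => (p:ℝ) ^ (-n : ℤ) with hc
  have hcpos : ∀ n, 0 < c n := fun n => zpow_pos hppos _
  have hcdef : ∀ n : ℕ, c n = ((p:ℝ)⁻¹) ^ n := by
    intro n
    show (p:ℝ) ^ (-n : ℤ) = _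
    rw [zpow_neg, zpow_natCast, inv_pow]
  -- the covering sets
  set t : ∀ n : ℕ, Fin (p ^ n) × Fin (p ^ n) → Set (ℝ × ℚ_[p]) := fun n ij =>
    Set.Icc ((ij.1 : ℝ) * c n) (((ij.1 : ℝ) + 1) * c n) ×ˢ
      closedBall (((ij.2 : ℕ) : ℚ_[p])) (c n) with ht
  have hdiam : ∀ n ij, EMetric.diam (t n ij) ≤ ENNReal.ofReal (c n) := by
    intro n ij
    refine EMetric.diam_le ?_
    rintro ⟨x1, x2⟩ ⟨hx1, hx2⟩ ⟨y1, y2⟩ ⟨hy1, hy2⟩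
    rw [Prod.edist_eq, max_le_iff]
    constructor
    · calc edist x1 y1 ≤ EMetric.diam (Set.Icc ((ij.1 : ℝ) * c n) (((ij.1 : ℝ) + 1) * c n)) :=
            EMetric.edist_le_diam_of_mem hx1 hy1
        _ ≤ ENNReal.ofReal (c n) := by
            rw [show EMetric.diam (Set.Icc ((ij.1 : ℝ) * c n) (((ij.1 : ℝ) + 1) * c n)) = _ from
              Real.ediam_Icc _ _]
            apply ENNReal.ofReal_le_ofReal
            ring_nf
            exact le_refl _
    · calc edist x2 y2 ≤ EMetric.diam (closedBall (((ij.2 : ℕ) : ℚ_[p])) (c n)) :=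
            EMetric.edist_le_diam_of_mem hx2 hy2
        _ ≤ ENNReal.ofReal (c n) := HHM.padic_diam_closedBall p _ _
  -- covering property
  have hcover : ∀ n, Set.Icc (0:ℝ) 1 ×ˢ {x : ℚ_[p] | ‖x‖ ≤ 1} ⊆ ⋃ ij, t n ij := by
    intro n
    rintro ⟨x, y⟩ ⟨hx, hy⟩
    simp only [Set.mem_Icc] at hx
    have hNpos : 0 < p ^ n := pow_pos (Fact.out : p.Prime).pos n
    -- real component index
    set i : ℕ := min ⌊x * (p ^ n : ℕ)⌋₊ (p ^ n - 1) with hi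
    have hiN : i < p ^ n := by omega
    have hcN : (c n) = ((p ^ n : ℕ) : ℝ)⁻¹ := by
      rw [hc]; push_cast; rw [zpow_neg, zpow_natCast]
    have hNR : (0:ℝ) < ((p ^ n : ℕ) : ℝ) := by exact_mod_cast hNpos
    have hxi : (i : ℝ) * c n ≤ x ∧ x ≤ ((i : ℝ) + 1) * c n := by
      have hxN : 0 ≤ x * ((p ^ n : ℕ) : ℝ) := mul_nonneg hx.1 hNR.le
      constructor
      · rw [hcN]
        rw [mul_inv_le_iff₀ hNR]  -- (i:ℝ) ≤ x * N
        have : (i : ℝ) ≤ ⌊x * (p ^ n : ℕ)⌋₊ := by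
          exact_mod_cast Nat.cast_le.mpr (min_le_left _ _)
        exact this.trans (Nat.floor_le hxN)
      · rw [hcN, ← div_eq_mul_inv, le_div_iff₀ hNR]
        rcases le_or_gt (⌊x * (p ^ n : ℕ)⌋₊) (p ^ n - 1) with hcase | hcase
        · have : i = ⌊x * (p ^ n : ℕ)⌋₊ := by omega
          rw [this]
          exact (Nat.lt_floor_add_one _).le
        · have : i = p ^ n - 1 := by omega
          rw [this]
          have : ((p ^ n - 1 : ℕ) : ℝ) + 1 = ((p ^ n : ℕ) : ℝ) := by
            push_cast [Nat.cast_sub (by omega : 1 ≤ p ^ n)]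
            ring
          rw [this]
          nlinarith [hx.2, hNR]
    -- padic component index
    set z : ℤ_[p] := ⟨y, hy⟩ with hz
    set j : ℕ := z.appr n with hj
    have hjN : j < p ^ n := PadicInt.appr_lt z n
    have hyj : y ∈ closedBall ((j : ℚ_[p])) (c n) := by
      have hmem : z - (j : ℤ_[p]) ∈ Ideal.span {((p : ℤ_[p])) ^ n} := PadicInt.appr_spec n z
      have hnorm : ‖z - (j : ℤ_[p])‖ ≤ (p:ℝ) ^ (-n : ℤ) :=
        (PadicInt.norm_le_pow_iff_mem_span_pow _ n).mpr hmem
      have : ‖y - (j : ℚ_[p])‖ ≤ (p:ℝ) ^ (-n : ℤ) := by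
        have hcoe : ((z - (j : ℤ_[p]) : ℤ_[p]) : ℚ_[p]) = y - (j : ℚ_[p]) := by
          push_cast [hz]
          rfl
        rw [← hcoe]
        exact_mod_cast hnorm
      simpa [Metric.mem_closedBall, dist_eq_norm, hc] using this
    exact Set.mem_iUnion.mpr ⟨(⟨i, hiN⟩, ⟨j, hjN⟩), ⟨Set.mem_Icc.mpr hxi, hyj⟩⟩
  -- apply the bound
  have hr0 : Tendsto (fun n => ENNReal.ofReal (c n)) atTop (nhds 0) := by
    rw [← ENNReal.ofReal_zero]
    apply ENNReal.tendsto_ofReal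
    have hce : c = fun n => ((p:ℝ)⁻¹) ^ n := funext hcdef
    rw [hce]
    exact tendsto_pow_atTop_nhds_zero_of_lt_one (by positivity) (by
      rw [inv_lt_one_iff₀]; right; exact hp1)
  have hle := Measure.hausdorffMeasure_le_liminf_sum 2 (Set.Icc (0:ℝ) 1 ×ˢ {x : ℚ_[p] | ‖x‖ ≤ 1})
    (fun n => ENNReal.ofReal (c n)) hr0 t
    (Eventually.of_forall fun n => fun ij => (hdiam n ij).trans (le_refl _))
    (Eventually.of_forall hcover)
  refine hle.trans ?_
  have hsum : ∀ n, (∑ ij : Fin (p ^ n) × Fin (p ^ n), EMetric.diam (t n ij) ^ (2:ℝ)) ≤ 1 := by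
    intro n
    have hq0 : ((p:ℝ≥0∞)) ^ n ≠ 0 := by
      have : (p:ℝ≥0∞) ≠ 0 := by
        exact_mod_cast Nat.cast_ne_zero.mpr (Fact.out : p.Prime).pos.ne'
      exact pow_ne_zero n this
    have hqtop : ((p:ℝ≥0∞)) ^ n ≠ ⊤ := by
      exact pow_ne_top (ENNReal.natCast_ne_top p)
    have hofc : ENNReal.ofReal (c n) = (((p:ℝ≥0∞)) ^ n)⁻¹ := by
      rw [hcdef, inv_pow, ENNReal.ofReal_inv_of_pos (by positivity),
        ENNReal.ofReal_pow hppos.le, ENNReal.ofReal_natCast]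
    calc (∑ ij : Fin (p ^ n) × Fin (p ^ n), EMetric.diam (t n ij) ^ (2:ℝ))
        ≤ ∑ _ij : Fin (p ^ n) × Fin (p ^ n), (ENNReal.ofReal (c n)) ^ (2:ℝ) := by
          refine Finset.sum_le_sum fun ij _ => ?_
          exact ENNReal.rpow_le_rpow (hdiam n ij) (by norm_num)
      _ = ((p ^ n : ℕ) : ℝ≥0∞) * ((p ^ n : ℕ) : ℝ≥0∞) * (ENNReal.ofReal (c n)) ^ (2:ℝ) := by
          rw [Finset.sum_const, Finset.card_univ, Fintype.card_prod, Fintype.card_fin]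
          simp [nsmul_eq_mul]
      _ = 1 := by
          rw [hofc, show (2:ℝ) = ((2:ℕ):ℝ) by norm_num, ENNReal.rpow_natCast]
          push_cast
          rw [show (((p:ℝ≥0∞)) ^ n)⁻¹ ^ (2:ℕ) = (((p:ℝ≥0∞)) ^ n)⁻¹ * (((p:ℝ≥0∞)) ^ n)⁻¹ by ring]
          rw [show ((p:ℝ≥0∞)) ^ n * ((p:ℝ≥0∞)) ^ n * ((((p:ℝ≥0∞)) ^ n)⁻¹ * (((p:ℝ≥0∞)) ^ n)⁻¹)
              = (((p:ℝ≥0∞)) ^ n * (((p:ℝ≥0∞)) ^ n)⁻¹) * (((p:ℝ≥0∞)) ^ n * (((p:ℝ≥0∞)) ^ n)⁻¹) by ring]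
          rw [ENNReal.mul_inv_cancel hq0 hqtop, one_mul]
  calc liminf (fun n => ∑ ij : Fin (p ^ n) × Fin (p ^ n), EMetric.diam (t n ij) ^ (2:ℝ)) atTop
      ≤ liminf (fun _n : ℕ => (1:ℝ≥0∞)) atTop :=
        liminf_le_liminf (Eventually.of_forall hsum)
    _ = 1 := liminf_const _

end HausdorffHaarMixedAux

/-- On `X = ℝ × ℚ_p` with the maximum metric, the 2-dimensional Hausdorff measure is a
translation-invariant Borel measure, finite and positive on `[0,1] × ℤ_p`; hence it is a
Haar measure on the locally compact abelian group `X`. -/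
theorem hausdorff_is_haar_mixed (p : ℕ) [Fact p.Prime]
    [MeasurableSpace (ℝ × ℚ_[p])] [BorelSpace (ℝ × ℚ_[p])] :
    (∀ (B : Set (ℝ × ℚ_[p])), MeasurableSet B → ∀ t : ℝ × ℚ_[p],
        μH[2] ((fun x => x + t) '' B) = μH[2] B) ∧
    0 < μH[2] (Set.Icc (0:ℝ) 1 ×ˢ {x : ℚ_[p] | ‖x‖ ≤ 1}) ∧
    μH[2] (Set.Icc (0:ℝ) 1 ×ˢ {x : ℚ_[p] | ‖x‖ ≤ 1}) < ⊤ ∧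
    (μH[2] : Measure (ℝ × ℚ_[p])).IsAddHaarMeasure := by
  have part1 : ∀ (B : Set (ℝ × ℚ_[p])), MeasurableSet B → ∀ t : ℝ × ℚ_[p],
      μH[2] ((fun x => x + t) '' B) = μH[2] B := fun B _ t =>
    (isometry_add_right t).hausdorffMeasure_image (Or.inl (by norm_num)) B
  -- positivity, transferred from the canonical Borel structure via the outer measure
  have part2 : 0 < μH[2] (Set.Icc (0:ℝ) 1 ×ˢ {x : ℚ_[p] | ‖x‖ ≤ 1}) := by
    rw [HHM.hm_eq_mkMetric]
    letI : MeasurableSpace ℚ_[p] := borel _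
    haveI : BorelSpace ℚ_[p] := ⟨rfl⟩
    exact HHM.lower_bound p
  have part3 : μH[2] (Set.Icc (0:ℝ) 1 ×ˢ {x : ℚ_[p] | ‖x‖ ≤ 1}) < ⊤ :=
    lt_of_le_of_lt (HHM.upper_bound p) ENNReal.one_lt_top
  refine ⟨part1, part2, part3, ?_⟩
  haveI hinv : (μH[2] : Measure (ℝ × ℚ_[p])).IsAddLeftInvariant := by
    refine ⟨fun g => ?_⟩
    ext s hs
    rw [Measure.map_apply (measurable_const_add g) hs]
    have him : (fun x => g + x) ⁻¹' s = (fun x => x + (-g)) '' s := by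
      ext x
      simp only [Set.mem_preimage, Set.mem_image]
      constructor
      · intro h; exact ⟨g + x, h, by abel⟩
      · rintro ⟨y, hy, rfl⟩
        have : g + (y + -g) = y := by abel
        rwa [this]
    rw [him]
    exact (isometry_add_right (-g)).hausdorffMeasure_image (Or.inl (by norm_num)) s
  have hKc : IsCompact (Set.Icc (0:ℝ) 1 ×ˢ {x : ℚ_[p] | ‖x‖ ≤ 1}) := by
    rw [HHM.unitBall_eq]
    exact isCompact_Icc.prod (isCompact_closedBall 0 1)
  have hKint : (interior (Set.Icc (0:ℝ) 1 ×ˢ {x : ℚ_[p] | ‖x‖ ≤ 1})).Nonempty := by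
    refine ⟨((1:ℝ)/2, 0), ?_⟩
    have hsub : Set.Ioo (0:ℝ) 1 ×ˢ ball (0:ℚ_[p]) 1 ⊆
        Set.Icc (0:ℝ) 1 ×ˢ {x : ℚ_[p] | ‖x‖ ≤ 1} := by
      rw [HHM.unitBall_eq]
      exact Set.prod_mono Set.Ioo_subset_Icc_self ball_subset_closedBall
    refine interior_maximal hsub (isOpen_Ioo.prod isOpen_ball) ?_
    exact ⟨by norm_num, mem_ball_self one_pos⟩
  exact Measure.isAddHaarMeasure_of_isCompact_nonempty_interior μH[2] _
    hKc hKint part2.ne' part3.ne
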